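/- For every n ≥ 2, every 1 ≤ j ≤ n and all natural numbers a, b, the number of minimal factorizations F ∈ 𝔐_n with T_1(F) = a and M_j(F) = b equals the number of minimal factorizations F ∈ 𝔐_n with T_1(F) = a and M_{n+1-j}(F) = b. -/

import Mathlib

/-- `F` is a minimal factorization of size `n`, i.e. a factorization of the cycle
`(1,2,…,n)` (represented as `finRotate n` on `Fin n`, where the element `i ∈ {1,…,n}`
corresponds to the index `i-1 : Fin n`) into `n-1` transpositions: each `F k` is a
transposition and the left-to-right product `τ₁ τ₂ ⋯ τ_{n-1}` (apply `τ₁` first)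
equals the cycle. -/
def IsMinFact (n : ℕ) (F : Fin (n - 1) → Equiv.Perm (Fin n)) : Prop :=
  (∀ k, (F k).IsSwap) ∧ (List.ofFn F).reverse.prod = finRotate n

/-- `T(F, x)`: the number of transpositions in `F` moving the element represented by `x`. -/
def Tcount {n : ℕ} (F : Fin (n - 1) → Equiv.Perm (Fin n)) (x : Fin n) : ℕ :=
  (Finset.univ.filter fun k : Fin (n - 1) => F k x ≠ x).card

/-- `M(F, x)`: the number of indices `1 ≤ k ≤ n-1` with `τ₁⋯τ_{k-1}(x) ≠ τ₁⋯τ_k(x)`,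
i.e. the number of transpositions affecting the trajectory of `x` (left-to-right
partial products, so `τ₁⋯τ_k` is the product of the first `k` entries, applied
`τ₁` first). -/
def Mcount {n : ℕ} (F : Fin (n - 1) → Equiv.Perm (Fin n)) (x : Fin n) : ℕ :=
  (Finset.univ.filter fun k : Fin (n - 1) =>
    ((List.ofFn F).take k.val).reverse.prod x ≠
      ((List.ofFn F).take (k.val + 1)).reverse.prod x).card

open scoped Fin.CommRing Fin.NatCast

namespace HorizSym

/-- The negation permutation of `Fin (m+2)`. -/
def neg (m : ℕ) : Equiv.Perm (Fin (m + 2)) :=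
  ⟨fun x => -x, fun x => -x, fun x => neg_neg x, fun x => neg_neg x⟩

lemma neg_apply (m : ℕ) (x : Fin (m + 2)) : neg m x = -x := rfl

lemma neg_inv (m : ℕ) : (neg m)⁻¹ = neg m := rfl

lemma neg_mul_neg (m : ℕ) : neg m * neg m = 1 := by
  ext x
  simp [neg_apply, Equiv.Perm.mul_apply]

/-- The horizontal-symmetry involution on factorizations. -/
def Φ {m : ℕ} (F : Fin (m + 1) → Equiv.Perm (Fin (m + 2))) :
    Fin (m + 1) → Equiv.Perm (Fin (m + 2)) :=
  fun k => neg m * F k.rev * (neg m)⁻¹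

lemma Φ_Φ {m : ℕ} (F : Fin (m + 1) → Equiv.Perm (Fin (m + 2))) : Φ (Φ F) = F := by
  funext k
  simp only [Φ, Fin.rev_rev, neg_inv]
  rw [show neg m * (neg m * F k * neg m) * neg m
      = (neg m * neg m) * F k * (neg m * neg m) by group, neg_mul_neg]
  simp

lemma prod_map_conj {G : Type*} [Group G] (σ : G) (l : List G) :
    (l.map fun g => σ * g * σ⁻¹).prod = σ * l.prod * σ⁻¹ := by
  induction l with
  | nil => simp
  | cons g t ih => simp only [List.map_cons, List.prod_cons, ih]; group

lemma ofFn_Φ {m : ℕ} (F : Fin (m + 1) → Equiv.Perm (Fin (m + 2))) :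
    List.ofFn (Φ F) = (List.ofFn F).reverse.map fun g => neg m * g * (neg m)⁻¹ := by
  apply List.ext_getElem
  · simp
  · intro i h1 h2
    simp only [List.getElem_ofFn, List.getElem_map, List.getElem_reverse,
      List.length_ofFn] at *
    show Φ F ⟨i, _⟩ = _
    simp only [Φ]
    congr 2
    exact congrArg F (by apply Fin.ext; simp only [Fin.val_rev]; omega)

lemma prod_eq_inv_reverse_prod {G : Type*} [Group G] (l : List G)
    (h : ∀ g ∈ l, g⁻¹ = g) : l.prod = l.reverse.prod⁻¹ := by
  rw [List.prod_reverse_noncomm]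
  rw [show l.map (fun x => x⁻¹) = l.map id from List.map_congr_left h]
  simp

lemma finRotate_inv_apply (m : ℕ) (x : Fin (m + 2)) :
    (finRotate (m + 2))⁻¹ x = x - 1 := by
  rw [Equiv.Perm.inv_def, Equiv.symm_apply_eq, finRotate_succ_apply]
  ring

lemma conj_finRotate (m : ℕ) :
    neg m * (finRotate (m + 2))⁻¹ * (neg m)⁻¹ = finRotate (m + 2) := by
  ext x
  simp only [Equiv.Perm.mul_apply, neg_inv, neg_apply, finRotate_inv_apply,
    finRotate_succ_apply]
  ring

section

variable {m : ℕ} {F : Fin (m + 1) → Equiv.Perm (Fin (m + 2))}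

lemma entries_inv (hs : ∀ k, (F k).IsSwap) :
    ∀ g ∈ List.ofFn F, g⁻¹ = g := by
  intro g hg
  obtain ⟨k, hk⟩ := List.mem_ofFn.1 hg
  obtain ⟨x, y, hxy, hk'⟩ := hs k
  rw [← hk, hk']
  exact Equiv.swap_inv x y

lemma isMinFact_Φ (h : IsMinFact (m + 2) F) : IsMinFact (m + 2) (Φ F) := by
  obtain ⟨hs, hp⟩ := h
  constructor
  · intro k
    obtain ⟨x, y, hxy, hk⟩ := hs k.rev
    refine ⟨neg m x, neg m y, fun hh => hxy ((neg m).injective hh), ?_⟩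
    rw [Φ, hk, ← Equiv.swap_apply_apply]
  · rw [ofFn_Φ, ← List.map_reverse, List.reverse_reverse, prod_map_conj,
      prod_eq_inv_reverse_prod _ (entries_inv hs), hp, conj_finRotate]

lemma Tcount_Φ (x : Fin (m + 2)) : Tcount (Φ F) x = Tcount F (-x) := by
  unfold Tcount
  apply Finset.card_equiv Fin.revPerm
  intro k
  simp only [Finset.mem_filter, Finset.mem_univ, true_and, Fin.revPerm_apply, ne_eq]
  have h : Φ F k x = -(F k.rev (-x)) := rfl
  rw [h, neg_eq_iff_eq_neg]

lemma Tcount_Φ_zero (h : 0 < m + 2) : Tcount (Φ F) ⟨0, h⟩ = Tcount F ⟨0, h⟩ := by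
  rw [Tcount_Φ]
  congr 1
  rw [show (⟨0, h⟩ : Fin (m + 2)) = 0 from rfl, neg_zero]

lemma partial_prod_Φ (hs : ∀ k, (F k).IsSwap)
    (hp : (List.ofFn F).reverse.prod = finRotate (m + 2)) (k : ℕ) :
    ((List.ofFn (Φ F)).take k).reverse.prod
      = neg m * (((List.ofFn F).take (m + 1 - k)).reverse.prod
          * (finRotate (m + 2))⁻¹) * (neg m)⁻¹ := by
  set l := List.ofFn F with hl
  set c := finRotate (m + 2)
  have hlen : l.length = m + 1 := by simp [hl]
  have hdrop : ∀ d : ℕ, (l.drop d).prod = (l.take d).reverse.prod * c⁻¹ := by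
    intro d
    have h2 : (l.drop d).reverse.prod * (l.take d).reverse.prod = c := by
      rw [← List.prod_append, ← List.reverse_append, List.take_append_drop]
      exact hp
    have h3 : (l.drop d).reverse.prod = c * ((l.take d).reverse.prod)⁻¹ :=
      eq_mul_inv_of_mul_eq h2
    have h1 : (l.drop d).prod = ((l.drop d).reverse.prod)⁻¹ :=
      prod_eq_inv_reverse_prod _ fun g hg =>
        entries_inv hs g (List.mem_of_mem_drop hg)
    rw [h1, h3, mul_inv_rev, inv_inv]
  rw [ofFn_Φ, ← List.map_take, ← List.map_reverse, prod_map_conj,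
    List.take_reverse, hlen, List.reverse_reverse, hdrop]

lemma Mcount_Φ (h : IsMinFact (m + 2) F) (x : Fin (m + 2)) :
    Mcount (Φ F) x = Mcount F (-x - 1) := by
  obtain ⟨hs, hp⟩ := h
  have hyx : (finRotate (m + 2))⁻¹ ((neg m)⁻¹ x) = -x - 1 := by
    rw [neg_inv, neg_apply, finRotate_inv_apply]
  unfold Mcount
  apply Finset.card_equiv Fin.revPerm
  intro k
  have hrev : (Fin.revPerm k).val = m - k.val := by
    simp only [Fin.revPerm_apply, Fin.val_rev]
    omega
  simp only [Finset.mem_filter, Finset.mem_univ, true_and, ne_eq]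
  rw [partial_prod_Φ hs hp, partial_prod_Φ hs hp, hrev,
    show m + 1 - (k.val + 1) = m - k.val by omega,
    show m - k.val + 1 = m + 1 - k.val by omega]
  simp only [Equiv.Perm.mul_apply, EmbeddingLike.apply_eq_iff_eq, hyx]
  exact ne_comm

end

end HorizSym

/-- for `1 ≤ j ≤ n`, the number of minimal factorizations with
`T_1 = a` and `M_j = b` equals the number of minimal factorizations with `T_1 = a`
and `M_{n+1-j} = b` (element `i` of `{1,…,n}` is the index `i-1 : Fin n`, so the
element `n+1-j` is the index `n-j`). -/
theorem horizontal_symmetry (n j : ℕ) (hn : 2 ≤ n) (hj1 : 1 ≤ j) (hj2 : j ≤ n)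
    (a b : ℕ) :
    Nat.card {F : Fin (n - 1) → Equiv.Perm (Fin n) //
      IsMinFact n F ∧ Tcount F ⟨0, by omega⟩ = a ∧ Mcount F ⟨j - 1, by omega⟩ = b} =
    Nat.card {F : Fin (n - 1) → Equiv.Perm (Fin n) //
      IsMinFact n F ∧ Tcount F ⟨0, by omega⟩ = a ∧ Mcount F ⟨n - j, by omega⟩ = b} := by
  obtain ⟨m, rfl⟩ : ∃ m, n = m + 2 := ⟨n - 2, by omega⟩
  set u : Fin (m + 2) := ⟨j - 1, by omega⟩ with hu
  set v : Fin (m + 2) := ⟨m + 2 - j, by omega⟩ with hv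
  have huv : v = -u - 1 := by
    have h0 : u = ((j - 1 : ℕ) : Fin (m + 2)) := by
      apply Fin.ext
      rw [Fin.val_cast_of_lt (by omega)]
    have h1 : v = ((m + 2 - j : ℕ) : Fin (m + 2)) := by
      apply Fin.ext
      rw [Fin.val_cast_of_lt (by omega)]
    have h2 : u + 1 + v = 0 := by
      rw [h0, h1]
      have h3 : ((j - 1 : ℕ) : Fin (m + 2)) + 1 + ((m + 2 - j : ℕ) : Fin (m + 2))
          = (((j - 1) + 1 + (m + 2 - j) : ℕ) : Fin (m + 2)) := by push_cast; ring
      rw [h3, show (j - 1) + 1 + (m + 2 - j) = m + 2 by omega]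
      exact Fin.natCast_self _
    linear_combination h2
  have hvu : u = -v - 1 := by rw [huv]; ring
  apply Nat.card_congr
  refine
    { toFun := fun Fh => ⟨HorizSym.Φ Fh.1, HorizSym.isMinFact_Φ Fh.2.1, ?_, ?_⟩
      invFun := fun Gh => ⟨HorizSym.Φ Gh.1, HorizSym.isMinFact_Φ Gh.2.1, ?_, ?_⟩
      left_inv := fun Fh => Subtype.ext (HorizSym.Φ_Φ Fh.1)
      right_inv := fun Gh => Subtype.ext (HorizSym.Φ_Φ Gh.1) }
  · rw [HorizSym.Tcount_Φ_zero]; exact Fh.2.2.1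
  · rw [HorizSym.Mcount_Φ Fh.2.1, ← hvu]; exact Fh.2.2.2
  · rw [HorizSym.Tcount_Φ_zero]; exact Gh.2.2.1
  · rw [HorizSym.Mcount_Φ Gh.2.1, ← huv]; exact Gh.2.2.2
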